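/- Neumann series decomposition of generalized degree: let (N,A) be a network on n ≥ 1 nodes with maximal degree 𝔡 = max{d_i : i ∈ N}, let C = 𝔡·I − L (so c_{ij} = a_{ij} for i ≠ j and c_{ii} = 𝔡 − d_i), and for ε > 0 let β = ε/(1 + ε𝔡). Then the series ∑_{k=0}^∞ (βC)^k d converges and x(ε) = (1 − β𝔡) · ∑_{k=0}^∞ (βC)^k d. -/

import Mathlib

open Matrix Filter

def IsNetwork {n : ℕ} (A : Matrix (Fin n) (Fin n) ℝ) : Prop :=
  (∀ i j, A i j = A j i) ∧ (∀ i, A i i = 0) ∧ (∀ i j, A i j = 0 ∨ A i j = 1)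

def deg {n : ℕ} (A : Matrix (Fin n) (Fin n) ℝ) (i : Fin n) : ℝ :=
  ∑ j, A i j

def lap {n : ℕ} (A : Matrix (Fin n) (Fin n) ℝ) : Matrix (Fin n) (Fin n) ℝ :=
  Matrix.diagonal (deg A) - A

theorem generalizedDegree_neumann_series
    {n : ℕ} (hn : 0 < n) (A : Matrix (Fin n) (Fin n) ℝ) (hA : IsNetwork A)
    (ε : ℝ) (hε : 0 < ε) (x : Fin n → ℝ)
    (hx : ((1 : Matrix (Fin n) (Fin n) ℝ) + ε • lap A).mulVec x = deg A)
    (D β : ℝ) (hD : D = ⨆ i, deg A i) (hβ : β = ε / (1 + ε * D))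
    (C : Matrix (Fin n) (Fin n) ℝ)
    (hC : C = D • (1 : Matrix (Fin n) (Fin n) ℝ) - lap A) :
    Summable (fun k : ℕ => ((β • C) ^ k).mulVec (deg A)) ∧
      x = (1 - β * D) • ∑' k : ℕ, ((β • C) ^ k).mulVec (deg A) := by
  have hNe : Nonempty (Fin n) := ⟨⟨0, hn⟩⟩
  have hAnn : ∀ i j, 0 ≤ A i j := by
    intro i j; rcases hA.2.2 i j with h | h <;> rw [h] <;> norm_num
  have hdnn : ∀ i, 0 ≤ deg A i := fun i => Finset.sum_nonneg fun j _ => hAnn i j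
  have hDle : ∀ i, deg A i ≤ D := by
    intro i; rw [hD]; exact le_ciSup (Set.Finite.bddAbove (Set.finite_range _)) i
  have hD0 : 0 ≤ D := le_trans (hdnn ⟨0, hn⟩) (hDle ⟨0, hn⟩)
  have hden : 0 < 1 + ε * D := by positivity
  have hβ0 : 0 ≤ β := by rw [hβ]; positivity
  have hβD : β * D < 1 := by
    rw [hβ, div_mul_eq_mul_div, div_lt_one hden]; nlinarith
  have hβD0 : 0 ≤ β * D := mul_nonneg hβ0 hD0
  -- entries of C
  have hCentry : ∀ i j, C i j = (if i = j then D - deg A i else 0) + A i j := by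
    intro i j
    simp only [hC, lap, Matrix.sub_apply, Matrix.smul_apply, Matrix.one_apply,
      Matrix.diagonal_apply, smul_eq_mul]
    split_ifs <;> ring
  have hCnn : ∀ i j, 0 ≤ C i j := by
    intro i j; rw [hCentry]
    have := hAnn i j
    split_ifs with h
    · have := hDle i; linarith
    · linarith
  have hCrow : ∀ i, ∑ j, C i j = D := by
    intro i
    simp only [hCentry]
    rw [Finset.sum_add_distrib, Finset.sum_ite_eq Finset.univ i (fun _ => D - deg A i)]
    simp [deg]
  set M := β • C with hM
  have key : ∀ v : Fin n → ℝ, ‖M.mulVec v‖ ≤ (β * D) * ‖v‖ := by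
    intro v
    rw [pi_norm_le_iff_of_nonneg (by positivity)]
    intro i
    have : M.mulVec v i = ∑ j, β * (C i j * v j) := by
      simp [Matrix.mulVec, dotProduct, hM, mul_assoc]
    rw [Real.norm_eq_abs, this]
    calc |∑ j, β * (C i j * v j)| ≤ ∑ j, |β * (C i j * v j)| := Finset.abs_sum_le_sum_abs _ _
      _ ≤ ∑ j, β * (C i j * ‖v‖) := by
          apply Finset.sum_le_sum
          intro j _
          rw [abs_mul, abs_of_nonneg hβ0, abs_mul, abs_of_nonneg (hCnn i j)]
          exact mul_le_mul_of_nonneg_left (mul_le_mul_of_nonneg_left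
            (norm_le_pi_norm v j) (hCnn i j)) hβ0
      _ = β * D * ‖v‖ := by
          rw [← Finset.mul_sum, ← Finset.sum_mul, hCrow]; ring
  have keypow : ∀ (k : ℕ) (v : Fin n → ℝ), ‖(M ^ k).mulVec v‖ ≤ (β * D) ^ k * ‖v‖ := by
    intro k
    induction k with
    | zero => intro v; simp
    | succ k ih =>
      intro v
      rw [pow_succ', ← Matrix.mulVec_mulVec]
      calc ‖M.mulVec ((M ^ k).mulVec v)‖ ≤ (β * D) * ‖(M ^ k).mulVec v‖ := key _
        _ ≤ (β * D) * ((β * D) ^ k * ‖v‖) :=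
            mul_le_mul_of_nonneg_left (ih v) hβD0
        _ = (β * D) ^ (k + 1) * ‖v‖ := by ring
  have hsum : Summable (fun k : ℕ => (M ^ k).mulVec (deg A)) := by
    apply Summable.of_norm_bounded
      ((summable_geometric_of_lt_one hβD0 hβD).mul_right ‖deg A‖)
    intro k; exact keypow k _
  refine ⟨hsum, ?_⟩
  set S := ∑' k : ℕ, (M ^ k).mulVec (deg A) with hS
  -- mulVec by M as continuous linear map
  have hmapS : M.mulVec S = ∑' k : ℕ, (M ^ (k + 1)).mulVec (deg A) := by
    have : M.mulVec S = ∑' k : ℕ, M.mulVec ((M ^ k).mulVec (deg A)) := by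
      exact (LinearMap.toContinuousLinearMap (Matrix.mulVecLin M)).map_tsum hsum
    rw [this]
    congr 1
    ext k
    rw [pow_succ', ← Matrix.mulVec_mulVec]
  have hSeq : (1 - M).mulVec S = deg A := by
    rw [Matrix.sub_mulVec, Matrix.one_mulVec, hmapS]
    have h0 := Summable.tsum_eq_zero_add hsum
    rw [hS]
    rw [h0]
    simp
  -- matrix identity
  have hmat : (1 : Matrix (Fin n) (Fin n) ℝ) + ε • lap A = (1 + ε * D) • (1 - M) := by
    have hβε : (1 + ε * D) * β = ε := by
      rw [hβ]; field_simp
    rw [hM, hC, smul_sub, smul_smul, hβε, smul_sub, smul_smul]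
    ext i j
    simp only [Matrix.add_apply, Matrix.sub_apply, Matrix.smul_apply, Matrix.one_apply,
      smul_eq_mul]
    split_ifs <;> ring
  have h1βD : 1 - β * D = (1 + ε * D)⁻¹ := by
    rw [hβ]; field_simp; ring
  have hxeq : (1 - M).mulVec x = (1 - β * D) • deg A := by
    have : ((1 + ε * D) • (1 - M)).mulVec x = deg A := by rw [← hmat]; exact hx
    rw [Matrix.smul_mulVec] at this
    rw [h1βD, ← this, smul_smul, inv_mul_cancel₀ (ne_of_gt hden), one_smul]
  have hyeq : (1 - M).mulVec ((1 - β * D) • S) = (1 - β * D) • deg A := by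
    rw [Matrix.mulVec_smul, hSeq]
  -- injectivity
  have hinj : ∀ w : Fin n → ℝ, (1 - M).mulVec w = 0 → w = 0 := by
    intro w hw
    rw [Matrix.sub_mulVec, Matrix.one_mulVec, sub_eq_zero] at hw
    have h1 := key w
    rw [← hw] at h1
    have h2 : ‖w‖ ≤ 0 := by nlinarith [norm_nonneg w]
    exact norm_le_zero_iff.mp h2
  have := hinj (x - (1 - β * D) • S) ?_
  · exact sub_eq_zero.mp this
  · rw [Matrix.mulVec_sub, hxeq, hyeq, sub_self]
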